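/- Let 𝓛 : ℝ^n → ℝ be differentiable with L-Lipschitz gradient, σ > 0, and consider two consecutive steps θ_t = θ_{t−1} + η·p_{t−1} and θ_{t+1} = θ_t + η·p_t, where the first update is the exactly isotropically preconditioned gradient step p_{t−1} = −σ·∇𝓛(θ_{t−1}) and p_t ∈ ℝ^n is an arbitrary nonzero vector (the next update), with p_{t−1} ≠ 0. Then for every η > 0, 𝓛(θ_{t−1}) − 𝓛(θ_{t+1}) ≥ (η/σ)·‖p_{t−1}‖² − (L·η²/2)·(‖p_{t−1}‖² + ‖p_t‖²) + (η/σ − L·η²)·‖p_{t−1}‖·‖p_t‖·S(p_{t−1}, p_t); moreover if η < 1/(L·σ) then the coefficient η/σ − L·η² of the alignment term is strictly positive, so the guaranteed two-step loss reduction is strictly increasing in the inter-step cosine S(p_{t−1}, p_t). -/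

import Mathlib

open scoped RealInnerProductSpace

lemma descent_lemma {n : ℕ} (𝓛 : EuclideanSpace ℝ (Fin n) → ℝ) (L : ℝ) (hL : 0 ≤ L)
    (hdiff : Differentiable ℝ 𝓛)
    (hlip : ∀ x y, ‖gradient 𝓛 x - gradient 𝓛 y‖ ≤ L * ‖x - y‖)
    (x v : EuclideanSpace ℝ (Fin n)) :
    𝓛 (x + v) ≤ 𝓛 x + ⟪gradient 𝓛 x, v⟫ + L / 2 * ‖v‖ ^ 2 := by
  set g : ℝ → ℝ := fun t => 𝓛 (x + t • v) - t * ⟪gradient 𝓛 x, v⟫ - L * ‖v‖ ^ 2 * t ^ 2 / 2 with hg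
  have hderiv : ∀ t : ℝ, HasDerivAt g
      (⟪gradient 𝓛 (x + t • v), v⟫ - ⟪gradient 𝓛 x, v⟫ - L * ‖v‖ ^ 2 * t) t := by
    intro t
    have hc : HasDerivAt (fun t : ℝ => x + t • v) v t := by
      simpa using (hasDerivAt_id t).smul_const v |>.const_add x
    have hf : HasFDerivAt 𝓛 ((InnerProductSpace.toDual ℝ _) (gradient 𝓛 (x + t • v)))
        (x + t • v) := (hdiff _).hasGradientAt.hasFDerivAt
    have h1 : HasDerivAt (fun t : ℝ => 𝓛 (x + t • v)) ⟪gradient 𝓛 (x + t • v), v⟫ t := by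
      simpa [InnerProductSpace.toDual_apply_apply, Function.comp_def] using hf.comp_hasDerivAt t hc
    have h2 : HasDerivAt (fun t : ℝ => t * ⟪gradient 𝓛 x, v⟫) ⟪gradient 𝓛 x, v⟫ t := by
      simpa using (hasDerivAt_id t).mul_const (⟪gradient 𝓛 x, v⟫ : ℝ)
    have h3 : HasDerivAt (fun t : ℝ => L * ‖v‖ ^ 2 * t ^ 2 / 2) (L * ‖v‖ ^ 2 * t) t := by
      have := (hasDerivAt_pow 2 t).const_mul (L * ‖v‖ ^ 2)
      exact (this.div_const 2).congr_deriv (by push_cast; ring)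
    exact (h1.sub h2).sub h3
  have hanti : AntitoneOn g (Set.Icc 0 1) := by
    apply antitoneOn_of_deriv_nonpos (convex_Icc 0 1)
    · exact Continuous.continuousOn (by
        have : ∀ t, DifferentiableAt ℝ g t := fun t => (hderiv t).differentiableAt
        exact (Differentiable.continuous this))
    · intro t ht
      exact (hderiv t).differentiableAt.differentiableWithinAt
    · intro t ht
      rw [interior_Icc] at ht
      rw [(hderiv t).deriv]
      have hcs : ⟪gradient 𝓛 (x + t • v) - gradient 𝓛 x, v⟫ ≤
          ‖gradient 𝓛 (x + t • v) - gradient 𝓛 x‖ * ‖v‖ := real_inner_le_norm _ _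
      have hl := hlip (x + t • v) x
      have hxx : ‖(x + t • v) - x‖ = t * ‖v‖ := by
        simp [add_sub_cancel_left, norm_smul, abs_of_pos ht.1]
      rw [hxx] at hl
      have : ⟪gradient 𝓛 (x + t • v), v⟫ - ⟪gradient 𝓛 x, v⟫ ≤ L * (t * ‖v‖) * ‖v‖ := by
        rw [← inner_sub_left]
        exact hcs.trans (mul_le_mul_of_nonneg_right hl (norm_nonneg v))
      nlinarith [norm_nonneg v]
  have h01 := hanti (Set.left_mem_Icc.2 zero_le_one) (Set.right_mem_Icc.2 zero_le_one) zero_le_one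
  simp only [hg] at h01
  simp only [zero_smul, add_zero, one_smul] at h01
  nlinarith [h01]

/-- **Trajectory coherence maximizes two-step descent.** Let `𝓛` be differentiable
with `L`-Lipschitz gradient, `σ > 0`, and consider two consecutive steps
`θ_t = θ_{t−1} + η·p_{t−1}`, `θ_{t+1} = θ_t + η·p_t` with
`p_{t−1} = −σ·∇𝓛(θ_{t−1}) ≠ 0` and `p_t` an arbitrary nonzero vector. Then for every
`η > 0`,
`𝓛(θ_{t−1}) − 𝓛(θ_{t+1}) ≥ (η/σ)‖p_{t−1}‖² − (Lη²/2)(‖p_{t−1}‖² + ‖p_t‖²)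
  + (η/σ − Lη²)·‖p_{t−1}‖‖p_t‖·S(p_{t−1}, p_t)`,
and for `η < 1/(L·σ)` the alignment coefficient `η/σ − Lη²` is strictly positive. -/
theorem two_step_descent_alignment
    {n : ℕ} (𝓛 : EuclideanSpace ℝ (Fin n) → ℝ) (L σ : ℝ) (hL : 0 < L) (hσ : 0 < σ)
    (hdiff : Differentiable ℝ 𝓛)
    (hlip : ∀ x y, ‖gradient 𝓛 x - gradient 𝓛 y‖ ≤ L * ‖x - y‖)
    (θ₀ p₀ p₁ : EuclideanSpace ℝ (Fin n))
    (hp₀ : p₀ = -(σ • gradient 𝓛 θ₀)) (hp₀ne : p₀ ≠ 0) (hp₁ne : p₁ ≠ 0)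
    (η : ℝ) (hη : 0 < η) :
    𝓛 θ₀ - 𝓛 ((θ₀ + η • p₀) + η • p₁) ≥
      (η / σ) * ‖p₀‖ ^ 2 - (L * η ^ 2 / 2) * (‖p₀‖ ^ 2 + ‖p₁‖ ^ 2) +
        (η / σ - L * η ^ 2) * (‖p₀‖ * ‖p₁‖ * (⟪p₀, p₁⟫ / (‖p₀‖ * ‖p₁‖))) ∧
    (η < 1 / (L * σ) → 0 < η / σ - L * η ^ 2) := by
  constructor
  · set g₀ := gradient 𝓛 θ₀ with hg₀
    have hn₀ : ‖p₀‖ ≠ 0 := norm_ne_zero_iff.2 hp₀ne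
    have hn₁ : ‖p₁‖ ≠ 0 := norm_ne_zero_iff.2 hp₁ne
    have hcos : ‖p₀‖ * ‖p₁‖ * (⟪p₀, p₁⟫ / (‖p₀‖ * ‖p₁‖)) = ⟪p₀, p₁⟫ := by
      field_simp
    rw [hcos]
    have hg₀eq : g₀ = -(1 / σ) • p₀ := by
      rw [hp₀]; rw [smul_neg, smul_smul]
      field_simp
      simp
    have hv : (θ₀ + η • p₀) + η • p₁ = θ₀ + η • (p₀ + p₁) := by
      rw [smul_add]; abel
    rw [hv]
    have hd := descent_lemma 𝓛 L hL.le hdiff hlip θ₀ (η • (p₀ + p₁))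
    have hinner : ⟪g₀, η • (p₀ + p₁)⟫ =
        η * (-(1 / σ) * (‖p₀‖ ^ 2 + ⟪p₀, p₁⟫)) := by
      rw [real_inner_smul_right, hg₀eq, real_inner_smul_left, inner_add_right,
        real_inner_self_eq_norm_sq]
    have hnorm : ‖η • (p₀ + p₁)‖ ^ 2 = η ^ 2 * (‖p₀‖ ^ 2 + 2 * ⟪p₀, p₁⟫ + ‖p₁‖ ^ 2) := by
      rw [norm_smul, mul_pow, Real.norm_eq_abs, sq_abs]
      rw [← real_inner_self_eq_norm_sq, inner_add_add_self, real_inner_self_eq_norm_sq,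
        real_inner_self_eq_norm_sq, real_inner_comm p₁ p₀]
      ring
    rw [hinner, hnorm] at hd
    have hring : η * (-(1 / σ) * (‖p₀‖ ^ 2 + ⟪p₀, p₁⟫)) +
        L / 2 * (η ^ 2 * (‖p₀‖ ^ 2 + 2 * ⟪p₀, p₁⟫ + ‖p₁‖ ^ 2)) =
        -((η / σ) * ‖p₀‖ ^ 2 - (L * η ^ 2 / 2) * (‖p₀‖ ^ 2 + ‖p₁‖ ^ 2) +
          (η / σ - L * η ^ 2) * ⟪p₀, p₁⟫) := by ring
    linarith [hd, hring.le, hring.ge]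
  · intro hlt
    have h1 : L * η * σ < 1 := by
      rw [lt_div_iff₀ (by positivity)] at hlt
      nlinarith
    have heq : η / σ - L * η ^ 2 = η * (1 - L * η * σ) / σ := by
      field_simp
    rw [heq]
    exact div_pos (mul_pos hη (by linarith)) hσ
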